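/- Let W ∈ ℝ^{n×n} be symmetric doubly stochastic, let η ∈ (0,1], and set W_η := I − η(I − W). Let ω ≥ 0, and let Y, H, Ỹ, G, G⁺ be square-integrable random n×m matrices with E[‖Y − Ỹ‖²] ≤ ω·E[‖Y − H‖²]. Set Y⁺ := W_η·Y + (G⁺ − G) + η(I − W)(Y − Ỹ). Then E[‖Y⁺ − Y‖²] ≤ 12·E[‖Y − Ȳ‖²] + 3·E[‖G⁺ − G‖²] + 12η²ω·E[‖Y − H‖²]. -/
import Mathlib


open MeasureTheory Finset

/-- Squared Frobenius norm of a real matrix. -/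
def frobSq {n m : ℕ} (M : Matrix (Fin n) (Fin m) ℝ) : ℝ := ∑ i, ∑ j, (M i j) ^ 2

/-- The matrix each of whose rows is the average of the rows of `M`. -/
noncomputable def rowAvg {n m : ℕ} (M : Matrix (Fin n) (Fin m) ℝ) :
    Matrix (Fin n) (Fin m) ℝ :=
  Matrix.of fun _ j => (n : ℝ)⁻¹ * ∑ i, M i j

lemma frobSq_nonneg {n m : ℕ} (M : Matrix (Fin n) (Fin m) ℝ) : 0 ≤ frobSq M :=
  Finset.sum_nonneg fun _ _ => Finset.sum_nonneg fun _ _ => sq_nonneg _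

lemma frobSq_add3 {n m : ℕ} (A B C : Matrix (Fin n) (Fin m) ℝ) :
    frobSq (A + B + C) ≤ 3 * (frobSq A + frobSq B + frobSq C) := by
  unfold frobSq
  calc ∑ i, ∑ j, ((A + B + C) i j) ^ 2
      ≤ ∑ i, ∑ j, (3 * (A i j) ^ 2 + 3 * (B i j) ^ 2 + 3 * (C i j) ^ 2) := by
        refine Finset.sum_le_sum fun i _ => Finset.sum_le_sum fun j _ => ?_
        simp only [Matrix.add_apply]
        nlinarith [sq_nonneg (A i j - B i j), sq_nonneg (A i j - C i j),
          sq_nonneg (B i j - C i j)]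
    _ = 3 * ((∑ i, ∑ j, (A i j) ^ 2) + (∑ i, ∑ j, (B i j) ^ 2) + (∑ i, ∑ j, (C i j) ^ 2)) := by
        simp only [Finset.sum_add_distrib, Finset.mul_sum, mul_add]

lemma frobSq_smul {n m : ℕ} (c : ℝ) (M : Matrix (Fin n) (Fin m) ℝ) :
    frobSq (c • M) = c ^ 2 * frobSq M := by
  unfold frobSq
  simp only [Matrix.smul_apply, smul_eq_mul, mul_pow, Finset.mul_sum]

lemma frobSq_sub_le {n m : ℕ} (A B : Matrix (Fin n) (Fin m) ℝ) :
    frobSq (A - B) ≤ 2 * frobSq A + 2 * frobSq B := by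
  unfold frobSq
  simp only [Finset.mul_sum, ← Finset.sum_add_distrib]
  refine Finset.sum_le_sum fun i _ => Finset.sum_le_sum fun j _ => ?_
  simp only [Matrix.sub_apply]
  nlinarith [sq_nonneg (A i j + B i j)]

/-- For a doubly stochastic `W`, `‖W M‖² ≤ ‖M‖²`. -/
lemma frobSq_mul_le {n m : ℕ} (W : Matrix (Fin n) (Fin n) ℝ)
    (hWnn : ∀ i j, 0 ≤ W i j) (hWrow : ∀ i, ∑ j, W i j = 1)
    (hWcol : ∀ j, ∑ i, W i j = 1) (M : Matrix (Fin n) (Fin m) ℝ) :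
    frobSq (W * M) ≤ frobSq M := by
  unfold frobSq
  rw [Finset.sum_comm (γ := Fin n) (α := Fin m), Finset.sum_comm (γ := Fin n) (α := Fin m)]
  refine Finset.sum_le_sum fun j _ => ?_
  calc ∑ i, ((W * M) i j) ^ 2
      ≤ ∑ i, ∑ k, W i k * (M k j) ^ 2 := by
        refine Finset.sum_le_sum fun i _ => ?_
        have := Finset.sum_sq_le_sum_mul_sum_of_sq_eq_mul Finset.univ
          (r := fun k => W i k * M k j) (f := fun k => W i k)
          (g := fun k => W i k * (M k j) ^ 2)
          (fun k _ => hWnn i k) (fun k _ => mul_nonneg (hWnn i k) (sq_nonneg _))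
          (fun k _ => by ring)
        simpa [Matrix.mul_apply, hWrow i] using this
    _ = ∑ k, (M k j) ^ 2 := by
        rw [Finset.sum_comm]
        refine Finset.sum_congr rfl fun k _ => ?_
        rw [← Finset.sum_mul, hWcol k, one_mul]

lemma frobSq_oneSubW {n m : ℕ} (W : Matrix (Fin n) (Fin n) ℝ)
    (hWnn : ∀ i j, 0 ≤ W i j) (hWrow : ∀ i, ∑ j, W i j = 1)
    (hWcol : ∀ j, ∑ i, W i j = 1) (M : Matrix (Fin n) (Fin m) ℝ) :
    frobSq ((1 - W) * M) ≤ 4 * frobSq M := by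
  have h1 : (1 - W) * M = M - W * M := by rw [Matrix.sub_mul, Matrix.one_mul]
  rw [h1]
  have := frobSq_sub_le M (W * M)
  have := frobSq_mul_le W hWnn hWrow hWcol M
  linarith

lemma oneSubW_rowAvg {n m : ℕ} (W : Matrix (Fin n) (Fin n) ℝ)
    (hWrow : ∀ i, ∑ j, W i j = 1) (M : Matrix (Fin n) (Fin m) ℝ) :
    (1 - W) * rowAvg M = 0 := by
  ext i j
  rw [Matrix.mul_apply]
  simp only [rowAvg, Matrix.of_apply, Matrix.zero_apply]
  rw [← Finset.sum_mul]
  have h : ∑ k, (1 - W) i k = 0 := by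
    simp [Matrix.sub_apply, Finset.sum_sub_distrib, hWrow i, Matrix.one_apply]
  rw [h, zero_mul]

lemma measurable_frobSq {n m : ℕ} {Ω : Type*} [MeasurableSpace Ω]
    (F : Ω → Matrix (Fin n) (Fin m) ℝ) (hF : ∀ i j, Measurable fun ω => F ω i j) :
    Measurable fun ω => frobSq (F ω) := by
  unfold frobSq
  exact Finset.measurable_sum _ fun i _ =>
    Finset.measurable_sum _ fun j _ => (hF i j).pow_const 2

/-- One-step drift bound for the compressed gradient-tracking
variable: with `W_η = I − η(I − W)`, `η ∈ (0,1]`, compression error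
`E‖Y − Ỹ‖² ≤ ω E‖Y − H‖²`, and `Y⁺ = W_η Y + (G⁺ − G) + η (I − W)(Y − Ỹ)`:
`E‖Y⁺ − Y‖² ≤ 12 E‖Y − Ȳ‖² + 3 E‖G⁺ − G‖² + 12 η² ω E‖Y − H‖²`. -/
theorem statement13 {n m : ℕ} (hn : 0 < n)
    {Ω : Type*} [MeasurableSpace Ω] (P : Measure Ω) [IsProbabilityMeasure P]
    (W : Matrix (Fin n) (Fin n) ℝ)
    (hWnn : ∀ i j, 0 ≤ W i j) (hWsymm : W.transpose = W)
    (hWrow : ∀ i, ∑ j, W i j = 1)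
    (η : ℝ) (hη0 : 0 < η) (hη1 : η ≤ 1)
    (ωc : ℝ) (hωc : 0 ≤ ωc)
    (Y H Ytil G Gp : Ω → Matrix (Fin n) (Fin m) ℝ)
    (hYmeas : ∀ i j, Measurable fun ω => Y ω i j)
    (hHmeas : ∀ i j, Measurable fun ω => H ω i j)
    (hYtmeas : ∀ i j, Measurable fun ω => Ytil ω i j)
    (hGmeas : ∀ i j, Measurable fun ω => G ω i j)
    (hGpmeas : ∀ i j, Measurable fun ω => Gp ω i j)
    (hYint : Integrable (fun ω => frobSq (Y ω)) P)
    (hHint : Integrable (fun ω => frobSq (H ω)) P)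
    (hYtint : Integrable (fun ω => frobSq (Ytil ω)) P)
    (hGint : Integrable (fun ω => frobSq (G ω)) P)
    (hGpint : Integrable (fun ω => frobSq (Gp ω)) P)
    (hcomp : ∫ ω, frobSq (Y ω - Ytil ω) ∂P ≤ ωc * ∫ ω, frobSq (Y ω - H ω) ∂P)
    (Yp : Ω → Matrix (Fin n) (Fin m) ℝ)
    (hYp : ∀ ω, Yp ω = (1 - η • (1 - W)) * Y ω + (Gp ω - G ω) +
      η • ((1 - W) * (Y ω - Ytil ω))) :
    ∫ ω, frobSq (Yp ω - Y ω) ∂P ≤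
      12 * ∫ ω, frobSq (Y ω - rowAvg (Y ω)) ∂P +
        3 * ∫ ω, frobSq (Gp ω - G ω) ∂P +
        12 * η ^ 2 * ωc * ∫ ω, frobSq (Y ω - H ω) ∂P := by
  have hWcol : ∀ j, ∑ i, W i j = 1 := by
    intro j
    have : ∑ i, W i j = ∑ i, W.transpose j i := by simp [Matrix.transpose_apply]
    rw [this, hWsymm]; exact hWrow j
  -- pointwise bound
  have key : ∀ ω, frobSq (Yp ω - Y ω) ≤
      12 * frobSq (Y ω - rowAvg (Y ω)) + 3 * frobSq (Gp ω - G ω) +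
        12 * η ^ 2 * frobSq (Y ω - Ytil ω) := by
    intro ω
    have hdecomp : Yp ω - Y ω =
        (-η) • ((1 - W) * (Y ω - rowAvg (Y ω))) + (Gp ω - G ω) +
          η • ((1 - W) * (Y ω - Ytil ω)) := by
      rw [hYp ω]
      have h1 : (1 - W) * (Y ω - rowAvg (Y ω)) = (1 - W) * Y ω := by
        rw [Matrix.mul_sub, oneSubW_rowAvg W hWrow, sub_zero]
      rw [h1]
      have h2 : (1 - η • (1 - W)) * Y ω = Y ω - η • ((1 - W) * Y ω) := by
        rw [Matrix.sub_mul, Matrix.one_mul, Matrix.smul_mul]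
      rw [h2, neg_smul]
      abel
    rw [hdecomp]
    have h3 := frobSq_add3 ((-η) • ((1 - W) * (Y ω - rowAvg (Y ω)))) (Gp ω - G ω)
      (η • ((1 - W) * (Y ω - Ytil ω)))
    rw [frobSq_smul, frobSq_smul] at h3
    have h4 := frobSq_oneSubW W hWnn hWrow hWcol (Y ω - rowAvg (Y ω))
    have h5 := frobSq_oneSubW W hWnn hWrow hWcol (Y ω - Ytil ω)
    have hη2 : η ^ 2 ≤ 1 := by nlinarith
    have hfnn := frobSq_nonneg (Y ω - rowAvg (Y ω))
    have hfnn2 := frobSq_nonneg (Y ω - Ytil ω)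
    have hfnn3 := frobSq_nonneg ((1 - W) * (Y ω - rowAvg (Y ω)))
    have hfnn4 := frobSq_nonneg ((1 - W) * (Y ω - Ytil ω))
    have hη2nn : (0:ℝ) ≤ η ^ 2 := sq_nonneg η
    calc frobSq ((-η) • ((1 - W) * (Y ω - rowAvg (Y ω))) + (Gp ω - G ω) +
          η • ((1 - W) * (Y ω - Ytil ω)))
        ≤ 3 * ((-η) ^ 2 * frobSq ((1 - W) * (Y ω - rowAvg (Y ω))) + frobSq (Gp ω - G ω) +
            η ^ 2 * frobSq ((1 - W) * (Y ω - Ytil ω))) := h3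
      _ ≤ 12 * frobSq (Y ω - rowAvg (Y ω)) + 3 * frobSq (Gp ω - G ω) +
            12 * η ^ 2 * frobSq (Y ω - Ytil ω) := by
          rw [neg_pow]
          simp only [neg_one_sq, one_mul, neg_neg]
          nlinarith [mul_le_mul_of_nonneg_left h4 hη2nn, mul_le_mul_of_nonneg_left h5 hη2nn,
            mul_le_mul_of_nonneg_right hη2 hfnn]
  -- measurability helpers
  have hYmAmeas : ∀ i j, Measurable fun ω => (Y ω - rowAvg (Y ω)) i j := by
    intro i j
    simp only [Matrix.sub_apply, rowAvg, Matrix.of_apply]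
    exact (hYmeas i j).sub (measurable_const.mul (Finset.measurable_sum _ fun k _ => hYmeas k j))
  have hGdmeas : ∀ i j, Measurable fun ω => (Gp ω - G ω) i j := fun i j => by
    simp only [Matrix.sub_apply]; exact (hGpmeas i j).sub (hGmeas i j)
  have hYYtmeas : ∀ i j, Measurable fun ω => (Y ω - Ytil ω) i j := fun i j => by
    simp only [Matrix.sub_apply]; exact (hYmeas i j).sub (hYtmeas i j)
  have hYHmeas : ∀ i j, Measurable fun ω => (Y ω - H ω) i j := fun i j => by
    simp only [Matrix.sub_apply]; exact (hYmeas i j).sub (hHmeas i j)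
  -- integrability helpers
  have int_of_bound : ∀ (F : Ω → Matrix (Fin n) (Fin m) ℝ)
      (_ : ∀ i j, Measurable fun ω => F ω i j) (g : Ω → ℝ) (_ : Integrable g P)
      (_ : ∀ ω, frobSq (F ω) ≤ g ω), Integrable (fun ω => frobSq (F ω)) P := by
    intro F hFmeas g hg hbnd
    refine hg.mono' (measurable_frobSq F hFmeas).aestronglyMeasurable ?_
    filter_upwards with ω
    rw [Real.norm_eq_abs, abs_of_nonneg (frobSq_nonneg _)]
    exact hbnd ω
  have hrameas : ∀ i j, Measurable fun ω => rowAvg (Y ω) i j := by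
    intro i j
    simp only [rowAvg, Matrix.of_apply]
    exact measurable_const.mul (Finset.measurable_sum _ fun k _ => hYmeas k j)
  have hra : ∀ ω, frobSq (rowAvg (Y ω)) ≤ frobSq (Y ω) := by
    intro ω
    unfold frobSq rowAvg
    rw [Finset.sum_comm (γ := Fin n) (α := Fin m), Finset.sum_comm (γ := Fin n) (α := Fin m)]
    refine Finset.sum_le_sum fun j _ => ?_
    simp only [Matrix.of_apply]
    rw [Finset.sum_const, Finset.card_univ, Fintype.card_fin, nsmul_eq_mul]
    have hn' : (0:ℝ) < n := Nat.cast_pos.mpr hn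
    have h1 : (n:ℝ) * (n:ℝ)⁻¹ = 1 := mul_inv_cancel₀ hn'.ne'
    have hcs := Finset.sum_sq_le_sum_mul_sum_of_sq_eq_mul Finset.univ
      (r := fun k : Fin n => (n : ℝ)⁻¹ * Y ω k j) (f := fun _ : Fin n => (n : ℝ)⁻¹)
      (g := fun k : Fin n => (n : ℝ)⁻¹ * (Y ω k j) ^ 2)
      (fun _ _ => by positivity) (fun k _ => by positivity) (fun k _ => by ring)
    simp only [Finset.sum_const, Finset.card_univ, Fintype.card_fin, nsmul_eq_mul,
      ← Finset.mul_sum] at hcs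
    rw [h1, one_mul] at hcs
    calc (n:ℝ) * ((n : ℝ)⁻¹ * ∑ i, Y ω i j) ^ 2
        ≤ (n:ℝ) * ((n:ℝ)⁻¹ * ∑ i, (Y ω i j) ^ 2) :=
          mul_le_mul_of_nonneg_left hcs hn'.le
      _ = ∑ i, (Y ω i j) ^ 2 := by rw [← mul_assoc, h1, one_mul]
  have hraInt : Integrable (fun ω => frobSq (rowAvg (Y ω))) P :=
    int_of_bound _ hrameas _ hYint hra
  have hint1 : Integrable (fun ω => frobSq (Y ω - rowAvg (Y ω))) P :=
    int_of_bound _ hYmAmeas (fun ω => 2 * frobSq (Y ω) + 2 * frobSq (rowAvg (Y ω)))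
      ((hYint.const_mul 2).add (hraInt.const_mul 2)) (fun ω => frobSq_sub_le _ _)
  have hint2 : Integrable (fun ω => frobSq (Gp ω - G ω)) P :=
    int_of_bound _ hGdmeas (fun ω => 2 * frobSq (Gp ω) + 2 * frobSq (G ω))
      ((hGpint.const_mul 2).add (hGint.const_mul 2)) (fun ω => frobSq_sub_le _ _)
  have hint3 : Integrable (fun ω => frobSq (Y ω - Ytil ω)) P :=
    int_of_bound _ hYYtmeas (fun ω => 2 * frobSq (Y ω) + 2 * frobSq (Ytil ω))
      ((hYint.const_mul 2).add (hYtint.const_mul 2)) (fun ω => frobSq_sub_le _ _)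
  have hint4 : Integrable (fun ω => frobSq (Y ω - H ω)) P :=
    int_of_bound _ hYHmeas (fun ω => 2 * frobSq (Y ω) + 2 * frobSq (H ω))
      ((hYint.const_mul 2).add (hHint.const_mul 2)) (fun ω => frobSq_sub_le _ _)
  have hrhs_int : Integrable (fun ω => 12 * frobSq (Y ω - rowAvg (Y ω)) +
      3 * frobSq (Gp ω - G ω) + 12 * η ^ 2 * frobSq (Y ω - Ytil ω)) P :=
    ((hint1.const_mul 12).add (hint2.const_mul 3)).add (hint3.const_mul (12 * η ^ 2))
  have hlhs_meas : ∀ i j, Measurable fun ω => (Yp ω - Y ω) i j := by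
    intro i j
    have heq : (fun ω => (Yp ω - Y ω) i j) = fun ω =>
        (((1 - η • (1 - W)) * Y ω + (Gp ω - G ω) + η • ((1 - W) * (Y ω - Ytil ω)) - Y ω :
          Matrix (Fin n) (Fin m) ℝ) i j) := by
      funext ω; rw [hYp ω]
    rw [heq]
    simp only [Matrix.sub_apply, Matrix.add_apply, Matrix.smul_apply, Matrix.mul_apply,
      smul_eq_mul]
    refine Measurable.sub ?_ (hYmeas i j)
    refine Measurable.add (Measurable.add ?_ ((hGpmeas i j).sub (hGmeas i j))) ?_
    · exact Finset.measurable_sum _ fun k _ => ((hYmeas k j).const_mul _)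
    · refine Measurable.const_mul ?_ η
      exact Finset.measurable_sum _ fun k _ => (((hYmeas k j).sub (hYtmeas k j)).const_mul _)
  have hlhs_int : Integrable (fun ω => frobSq (Yp ω - Y ω)) P :=
    int_of_bound _ hlhs_meas _ hrhs_int key
  calc ∫ ω, frobSq (Yp ω - Y ω) ∂P
      ≤ ∫ ω, (12 * frobSq (Y ω - rowAvg (Y ω)) + 3 * frobSq (Gp ω - G ω) +
          12 * η ^ 2 * frobSq (Y ω - Ytil ω)) ∂P :=
        integral_mono hlhs_int hrhs_int key
    _ = 12 * ∫ ω, frobSq (Y ω - rowAvg (Y ω)) ∂P + 3 * ∫ ω, frobSq (Gp ω - G ω) ∂P +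
          12 * η ^ 2 * ∫ ω, frobSq (Y ω - Ytil ω) ∂P := by
        have hA : Integrable (fun ω => 12 * frobSq (Y ω - rowAvg (Y ω)) +
            3 * frobSq (Gp ω - G ω)) P := (hint1.const_mul 12).add (hint2.const_mul 3)
        have hA1 : Integrable (fun ω => 12 * frobSq (Y ω - rowAvg (Y ω))) P := hint1.const_mul 12
        have hA2 : Integrable (fun ω => 3 * frobSq (Gp ω - G ω)) P := hint2.const_mul 3
        have hC : Integrable (fun ω => 12 * η ^ 2 * frobSq (Y ω - Ytil ω)) P :=
          hint3.const_mul (12 * η ^ 2)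
        rw [integral_add hA hC, integral_add hA1 hA2,
          integral_const_mul, integral_const_mul, integral_const_mul]
    _ ≤ 12 * ∫ ω, frobSq (Y ω - rowAvg (Y ω)) ∂P + 3 * ∫ ω, frobSq (Gp ω - G ω) ∂P +
          12 * η ^ 2 * ωc * ∫ ω, frobSq (Y ω - H ω) ∂P := by
        have h12 : (0:ℝ) ≤ 12 * η ^ 2 := by positivity
        have := mul_le_mul_of_nonneg_left hcomp h12
        linarith [this]
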